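/- Let Ω = ⋃_{k=1}^K Ω^k be a partition of the data manifold into classes, f : X → ℝ^d a feature map, and ω_1,…,ω_K ∈ ℝ^d. Assume: (1) for every labeled point (x,y), ω_y^T f(x) > ω_k^T f(x) for all k ≠ y; (2) for every x ∈ Ω, max_{k≤K} ω_k^T f(x) > 0, and for every generated point x_g outside the closure of Ω, max_{k≤K} ω_k^T f(x_g) < 0; (3) for every x_k ∈ Ω^k and every j ≠ k there exist a labeled point x_j of class j, a generated point x_g outside Ω̄, and α ∈ (0,1) with f(x_g) = α·f(x_k) + (1−α)·f(x_j). Then for every class k and every x ∈ Ω^k, ω_k^T f(x) > ω_j^T f(x) for all j ≠ k. -/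

import Mathlib

/-- Proposition 3: under correctness on labeled data, true/fake separation by
the max-logit sign, and traversal of each class by convex combinations of
features through fake points, the discriminator classifies every point of the
data manifold correctly. -/
theorem optimal_discriminator_on_unlabeled
    {X : Type*} {K d : ℕ}
    (Ω : Fin K → Set X)            -- class-k part of the data manifold
    (labeled : Set (X × Fin K))    -- labeled data with their labels
    (Gout : Set X)                 -- generated points outside the closure of Ω
    (f : X → EuclideanSpace ℝ (Fin d)) (ω : Fin K → EuclideanSpace ℝ (Fin d))
    (hlab_mem : ∀ xy ∈ labeled, xy.1 ∈ Ω xy.2)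
    -- Assumption 1 (1): correct decisions on labeled data
    (h1 : ∀ xy ∈ labeled, ∀ k : Fin K, k ≠ xy.2 →
      (inner ℝ (ω k) (f xy.1) : ℝ) < inner ℝ (ω xy.2) (f xy.1))
    -- Assumption 1 (2): positive max-logit on the data manifold ...
    (h2a : ∀ x, x ∈ ⋃ k, Ω k → ∃ k : Fin K, (0 : ℝ) < inner ℝ (ω k) (f x))
    -- ... and negative max-logit on fake points
    (h2b : ∀ xg ∈ Gout, ∀ k : Fin K, (inner ℝ (ω k) (f xg) : ℝ) < 0)
    -- Assumptions 1 (3)+(4): for each point of class k and each other class j,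
    -- a fake point whose feature is a convex combination of the features of
    -- the point and of a labeled point of class j
    (h34 : ∀ k : Fin K, ∀ xk ∈ Ω k, ∀ j : Fin K, j ≠ k →
      ∃ xj : X, (xj, j) ∈ labeled ∧
        ∃ xg ∈ Gout, ∃ α ∈ Set.Ioo (0 : ℝ) 1,
          f xg = α • f xk + (1 - α) • f xj) :
    ∀ k : Fin K, ∀ x ∈ Ω k, ∀ j : Fin K, j ≠ k →
      (inner ℝ (ω j) (f x) : ℝ) < inner ℝ (ω k) (f x) := by
  intro k x hx
  have key : ∀ j : Fin K, j ≠ k → (inner ℝ (ω j) (f x) : ℝ) < 0 := by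
    intro j hj
    obtain ⟨xj, hxjlab, xg, hxg, α, hα, hfg⟩ := h34 k x hx j hj
    have hxjΩ : xj ∈ Ω j := hlab_mem _ hxjlab
    obtain ⟨i, hi⟩ := h2a xj (Set.mem_iUnion.2 ⟨j, hxjΩ⟩)
    have hjj : (0 : ℝ) < inner ℝ (ω j) (f xj) := by
      rcases eq_or_ne i j with rfl | h
      · exact hi
      · exact hi.trans (h1 _ hxjlab i h)
    have hgj := h2b xg hxg j
    rw [hfg, inner_add_right, real_inner_smul_right, real_inner_smul_right] at hgj
    obtain ⟨h0, h1'⟩ := hα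
    nlinarith
  obtain ⟨m, hm⟩ := h2a x (Set.mem_iUnion.2 ⟨k, hx⟩)
  have hmk : m = k := by
    by_contra h
    exact absurd hm (not_lt.2 (key m h).le)
  subst hmk
  intro j hj
  exact (key j hj).trans hm
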